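/- arXiv:1110.6387 — 5 statements merged into one kernel-verified Lean document; each statement's English description precedes it below -/
import Mathlib

section
/- A hitting CNF formula F with n variables has exactly 2^n − Σ_{C∈F} 2^{n−|C|} satisfying total assignments over its n variables. In particular, F is satisfiable iff Σ_{C∈F} 2^{n−|C|} < 2^n. -/
/-- A clause is a finite set of literals; a literal is a variable paired with a polarity. -/
abbrev Clause (V : Type*) := Finset (V × Bool)

/-- A CNF formula is a finite set of clauses. -/
abbrev CNF (V : Type*) := Finset (Finset (V × Bool))

variable {V : Type*} [DecidableEq V]

/-- A (total) assignment satisfies a clause if some literal evaluates to true. -/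
def satClause (σ : V → Bool) (C : Clause V) : Prop := ∃ l ∈ C, σ l.1 = l.2

/-- An assignment satisfies a formula if it satisfies every clause. -/
def Satisfies (σ : V → Bool) (F : CNF V) : Prop := ∀ C ∈ F, satClause σ C

/-- A formula is satisfiable if some total assignment satisfies it. -/
def Satisfiable (F : CNF V) : Prop := ∃ σ : V → Bool, Satisfies σ F

/-- The variables of a clause. -/
def varsC (C : Clause V) : Finset V := C.image Prod.fst

/-- The variables of a formula. -/
def varsF (F : CNF V) : Finset V := F.sup varsC

/-- `F[τ]` where `τ` is regarded as a truth assignment on the set `B` of variables: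
remove all clauses satisfied by `τ` (i.e. containing a literal over `B` set to true),
and remove all literals over `B` from the remaining clauses. -/
def reduceF (F : CNF V) (B : Finset V) (τ : V → Bool) : CNF V :=
  (F.filter (fun C => ∀ l ∈ C, l.1 ∈ B → τ l.1 ≠ l.2)).image
    (fun C => C.filter (fun l => l.1 ∉ B))

/-- Two clauses clash if they contain a complementary pair of literals. -/
def Clash (C C' : Clause V) : Prop := ∃ l ∈ C, (l.1, !l.2) ∈ C'

/-- A hitting formula: any two distinct clauses clash. -/
def Hitting (F : CNF V) : Prop := ∀ C ∈ F, ∀ C' ∈ F, C ≠ C' → Clash C C'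

/-- Clauses contain no complementary pair of literals. -/
def GoodF (F : CNF V) : Prop := ∀ C ∈ F, ∀ x : V, ¬((x, true) ∈ C ∧ (x, false) ∈ C)

instance (σ : V → Bool) (F : CNF V) : Decidable (Satisfies σ F) :=
  inferInstanceAs (Decidable (∀ C ∈ F, ∃ l ∈ C, σ l.1 = l.2))

lemma card_agree [Fintype V] (s : Finset V) (f : V → Bool) :
    (Finset.univ.filter (fun σ : V → Bool => ∀ x ∈ s, σ x = f x)).card
      = 2 ^ (Fintype.card V - s.card) := by
  classical
  have e : {σ : V → Bool // ∀ x ∈ s, σ x = f x} ≃ ({x : V // x ∉ s} → Bool) :=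
  { toFun := fun σ x => σ.1 x.1
    invFun := fun g => ⟨fun x => if h : x ∈ s then f x else g ⟨x, h⟩, fun x hx => by simp [hx]⟩
    left_inv := by
      rintro ⟨σ, hσ⟩
      ext x
      by_cases h : x ∈ s <;> simp [h, hσ x]
    right_inv := by
      intro g; ext x; simp [x.2] }
  have h1 : (Finset.univ.filter (fun σ : V → Bool => ∀ x ∈ s, σ x = f x)).card
      = Fintype.card {σ : V → Bool // ∀ x ∈ s, σ x = f x} := (Fintype.card_subtype _).symm
  rw [h1, Fintype.card_congr e, Fintype.card_fun, Fintype.card_bool, Fintype.card_subtype]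
  congr 1
  rw [Finset.filter_not, Finset.card_sdiff_of_subset (by simp [Finset.filter_subset])]
  simp

/-- A hitting formula over `n` variables has exactly `2^n − Σ_{C∈F} 2^{n−|C|}` satisfying
total assignments; in particular it is satisfiable iff `Σ_{C∈F} 2^{n−|C|} < 2^n`. -/
theorem stmt5 [Fintype V] (F : CNF V) (hGood : GoodF F) (hHit : Hitting F)
    (hVar : varsF F = Finset.univ) :
    (Finset.univ.filter (fun σ : V → Bool => Satisfies σ F)).card
        = 2 ^ Fintype.card V - ∑ C ∈ F, 2 ^ (Fintype.card V - C.card) ∧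
    (Satisfiable F ↔ ∑ C ∈ F, 2 ^ (Fintype.card V - C.card) < 2 ^ Fintype.card V) := by
  classical
  set n := Fintype.card V with hn
  -- cardinality of falsifying set of each clause
  have hfals : ∀ C ∈ F,
      (Finset.univ.filter (fun σ : V → Bool => ∀ l ∈ C, σ l.1 = !l.2)).card
        = 2 ^ (n - C.card) := by
    intro C hC
    have hiff : ∀ σ : V → Bool,
        (∀ l ∈ C, σ l.1 = !l.2) ↔ (∀ x ∈ varsC C, σ x = decide ((x, false) ∈ C)) := by
      intro σ
      constructor
      · intro h x hx
        rcases Finset.mem_image.mp hx with ⟨⟨y, b⟩, hl, hy⟩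
        subst hy
        cases b with
        | false => simpa [hl] using h _ hl
        | true =>
          have h1 : ¬ ((y, false) ∈ C) := fun hf => hGood C hC y ⟨hl, hf⟩
          have := h _ hl
          simp_all
      · intro h ⟨x, b⟩ hl
        have hx : x ∈ varsC C := Finset.mem_image.mpr ⟨(x, b), hl, rfl⟩
        have := h x hx
        cases b with
        | false => simp_all
        | true =>
          have h1 : ¬ ((x, false) ∈ C) := fun hf => hGood C hC x ⟨hl, hf⟩
          simp_all
    have hcv : (varsC C).card = C.card := by
      apply Finset.card_image_of_injOn
      rintro ⟨x, b⟩ h1 ⟨y, b'⟩ h2 hxy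
      simp only at hxy
      subst hxy
      cases b <;> cases b' <;> simp_all
      · exact absurd ⟨h2, h1⟩ (hGood C hC x)
      · exact absurd ⟨h1, h2⟩ (hGood C hC x)
    calc (Finset.univ.filter (fun σ : V → Bool => ∀ l ∈ C, σ l.1 = !l.2)).card
        = (Finset.univ.filter (fun σ : V → Bool =>
            ∀ x ∈ varsC C, σ x = decide ((x, false) ∈ C))).card := by
          congr 1; apply Finset.filter_congr; intro σ _; simpa using hiff σ
      _ = 2 ^ (n - (varsC C).card) := card_agree _ _
      _ = 2 ^ (n - C.card) := by rw [hcv]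
  -- the non-satisfying assignments are the disjoint union of the falsifying sets
  have hpart : (Finset.univ.filter (fun σ : V → Bool => ¬ Satisfies σ F))
      = F.biUnion (fun C => Finset.univ.filter (fun σ : V → Bool => ∀ l ∈ C, σ l.1 = !l.2)) := by
    ext σ
    simp only [Finset.mem_filter, Finset.mem_univ, true_and, Finset.mem_biUnion]
    simp only [Satisfies, satClause]
    push_neg
    constructor
    · rintro ⟨C, hC, h⟩
      exact ⟨C, hC, fun l hl => by have := h l hl; cases hb : l.2 <;> simp_all⟩
    · rintro ⟨C, hC, h⟩
      exact ⟨C, hC, fun l hl => by have := h l hl; cases hb : l.2 <;> simp_all⟩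
  have hdisj : (F : Set (Clause V)).PairwiseDisjoint
      (fun C => Finset.univ.filter (fun σ : V → Bool => ∀ l ∈ C, σ l.1 = !l.2)) := by
    intro C hC C' hC' hne
    refine Finset.disjoint_left.mpr ?_
    intro σ h1 h2
    simp only [Finset.mem_filter] at h1 h2
    rcases hHit C hC C' hC' hne with ⟨l, hl, hl'⟩
    have e1 := h1.2 l hl
    have e2 := h2.2 _ hl'
    simp at e2
    rw [e1] at e2
    exact (Bool.not_ne_self l.2).symm e2.symm
  have hcardU : Fintype.card (V → Bool) = 2 ^ n := by
    rw [Fintype.card_fun, Fintype.card_bool]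
  have hsum : (Finset.univ.filter (fun σ : V → Bool => ¬ Satisfies σ F)).card
      = ∑ C ∈ F, 2 ^ (n - C.card) := by
    rw [hpart, Finset.card_biUnion hdisj]
    exact Finset.sum_congr rfl hfals
  have hsplit : (Finset.univ.filter (fun σ : V → Bool => Satisfies σ F)).card
      + (Finset.univ.filter (fun σ : V → Bool => ¬ Satisfies σ F)).card = 2 ^ n := by
    rw [Finset.card_filter_add_card_filter_not, Finset.card_univ, hcardU]
  have key : (Finset.univ.filter (fun σ : V → Bool => Satisfies σ F)).card
      + ∑ C ∈ F, 2 ^ (n - C.card) = 2 ^ n := by rw [← hsum]; exact hsplit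
  constructor
  · omega
  · have hsat : Satisfiable F ↔
        0 < (Finset.univ.filter (fun σ : V → Bool => Satisfies σ F)).card := by
      rw [Finset.card_pos]
      constructor
      · rintro ⟨σ, hσ⟩; exact ⟨σ, by simp [hσ]⟩
      · rintro ⟨σ, hσ⟩; exact ⟨σ, (Finset.mem_filter.mp hσ).2⟩
    rw [hsat]
    omega
end

section
/- A set B of variables is a strong Horn-backdoor set of a CNF formula F if and only if B is a vertex cover of the positive primal graph of F (the graph on var(F) where two distinct variables are adjacent iff they occur together positively in some clause of F). -/
variable {V : Type*} [DecidableEq V]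

/-- Horn formulas: each clause contains at most one positive literal. -/
def IsHorn (F : CNF V) : Prop := ∀ C ∈ F, (C.filter (fun l => l.2 = true)).card ≤ 1

/-- `B` is a strong Horn-backdoor set of `F` iff `B` is a vertex cover of the positive
primal graph of `F` (two distinct variables adjacent iff they occur together positively
in some clause). -/
theorem stmt6 (F : CNF V) (hGood : GoodF F) (B : Finset V) :
    (∀ τ : V → Bool, IsHorn (reduceF F B τ)) ↔
      (∀ x y : V, x ≠ y → (∃ C ∈ F, (x, true) ∈ C ∧ (y, true) ∈ C) → x ∈ B ∨ y ∈ B) := by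
  constructor
  · rintro h x y hxy ⟨C, hCF, hxC, hyC⟩
    by_contra hcon
    push_neg at hcon
    obtain ⟨hxB, hyB⟩ := hcon
    -- choose τ making all B-literals of C false
    set τ : V → Bool := fun v => if (v, true) ∈ C then false else true with hτ
    have hCsurv : ∀ l ∈ C, l.1 ∈ B → τ l.1 ≠ l.2 := by
      rintro ⟨v, b⟩ hl hvB
      simp only [hτ]
      cases b with
      | true => simp [hl]
      | false =>
        have : (v, true) ∉ C := fun h' => hGood C hCF v ⟨h', hl⟩
        simp [this]
    have hD : C.filter (fun l => l.1 ∉ B) ∈ reduceF F B τ := by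
      apply Finset.mem_image_of_mem
      exact Finset.mem_filter.mpr ⟨hCF, hCsurv⟩
    have := h τ _ hD
    have hx : (x, true) ∈ (C.filter (fun l => l.1 ∉ B)).filter (fun l => l.2 = true) := by
      simp [hxC, hxB]
    have hy : (y, true) ∈ (C.filter (fun l => l.1 ∉ B)).filter (fun l => l.2 = true) := by
      simp [hyC, hyB]
    have h2 : ({((x : V), true), ((y : V), true)} : Finset (V × Bool)) ⊆
        (C.filter (fun l => l.1 ∉ B)).filter (fun l => l.2 = true) := by
      intro l hl
      simp only [Finset.mem_insert, Finset.mem_singleton] at hl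
      rcases hl with rfl | rfl
      · exact hx
      · exact hy
    have hcard : 2 ≤ ((C.filter (fun l => l.1 ∉ B)).filter (fun l => l.2 = true)).card := by
      calc 2 = ({((x : V), true), ((y : V), true)} : Finset (V × Bool)).card := by
              rw [Finset.card_insert_of_notMem (by simp [hxy]), Finset.card_singleton]
           _ ≤ _ := Finset.card_le_card h2
    omega
  · intro h τ D hD
    simp only [reduceF, Finset.mem_image, Finset.mem_filter] at hD
    obtain ⟨C, ⟨hCF, -⟩, rfl⟩ := hD
    rw [Finset.card_le_one]
    rintro ⟨x, bx⟩ hx ⟨y, by'⟩ hy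
    simp only [Finset.mem_filter] at hx hy
    obtain ⟨⟨hxC, hxB⟩, hbx⟩ := hx
    obtain ⟨⟨hyC, hyB⟩, hby⟩ := hy
    subst hbx hby
    by_contra hne
    have hxy : x ≠ y := fun h' => hne (by rw [h'])
    rcases h x y hxy ⟨C, hCF, hxC, hyC⟩ with h' | h' <;> simp_all
end

section
/- Let F be a CNF formula and let G be the graph whose vertices are all literals x^0, x^1 for x ∈ var(F), with edges {x^0, x^1} for each variable x (forming a perfect matching M), and edges {x^ε, y^δ} for each pair of distinct literals occurring together in some clause of F. Then F has a deletion RHorn-backdoor set of size at most k if and only if G has a vertex cover of size at most |M| + k. -/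
variable {V : Type*} [DecidableEq V]

/-- The renaming `r_X(F)`: flip the polarity of all occurrences of variables in `X`. -/
def renameF (F : CNF V) (X : Finset V) : CNF V :=
  F.image (fun C => C.image (fun l => if l.1 ∈ X then (l.1, !l.2) else l))

/-- Renamable Horn formulas. -/
def IsRHorn (F : CNF V) : Prop := ∃ X : Finset V, IsHorn (renameF F X)

/-- `F − B`: delete all literals over variables in `B` from all clauses. -/
def deleteF (F : CNF V) (B : Finset V) : CNF V :=
  F.image (fun C => C.filter (fun l => l.1 ∉ B))

lemma mem_varsF {F : CNF V} {C : Clause V} {l : V × Bool} (hC : C ∈ F) (hl : l ∈ C) :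
    l.1 ∈ varsF F :=
  Finset.le_sup (f := varsC) hC (Finset.mem_image_of_mem Prod.fst hl)

/-- `F` has a deletion RHorn-backdoor set of size at most `k` iff the literal graph of `F`
(with the matching edges `{x⁰, x¹}` for `x ∈ var(F)` and an edge between any two distinct
literals occurring together in a clause) has a vertex cover of size at most `|var(F)| + k`. -/
theorem stmt11 (F : CNF V) (k : ℕ) :
    (∃ B : Finset V, B.card ≤ k ∧ IsRHorn (deleteF F B)) ↔
      (∃ K : Finset (V × Bool), K.card ≤ (varsF F).card + k ∧
        (∀ x ∈ varsF F, (x, false) ∈ K ∨ (x, true) ∈ K) ∧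
        (∀ C ∈ F, ∀ l ∈ C, ∀ l' ∈ C, l ≠ l' → l ∈ K ∨ l' ∈ K)) := by
  constructor
  · rintro ⟨B, hBk, X, hHorn⟩
    refine ⟨(varsF F).image (fun x => (x, decide (x ∈ X))) ∪
      (B.filter (· ∈ varsF F)).image (fun x => (x, !decide (x ∈ X))), ?_, ?_, ?_⟩
    · calc _ ≤ ((varsF F).image (fun x => (x, decide (x ∈ X)))).card +
            ((B.filter (· ∈ varsF F)).image (fun x => (x, !decide (x ∈ X)))).card :=
            Finset.card_union_le _ _
        _ ≤ (varsF F).card + k := by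
            gcongr
            · exact Finset.card_image_le
            · exact le_trans Finset.card_image_le (le_trans (Finset.card_filter_le _ _) hBk)
    · intro x hx
      have hmem := Finset.mem_union_left
        ((B.filter (· ∈ varsF F)).image (fun x => (x, !decide (x ∈ X))))
        (Finset.mem_image_of_mem (fun x => (x, decide (x ∈ X))) hx)
      by_cases hxX : x ∈ X
      · right; simpa [hxX] using hmem
      · left; simpa [hxX] using hmem
    · intro C hC l hl l' hl' hne
      by_contra hcon
      push_neg at hcon
      obtain ⟨hlK, hl'K⟩ := hcon
      have hvl : l.1 ∈ varsF F := mem_varsF hC hl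
      have hvl' : l'.1 ∈ varsF F := mem_varsF hC hl'
      -- l.2 = !decide (l.1 ∈ X) and l.1 ∉ B
      have key : ∀ m : V × Bool, m ∈ C → m.1 ∈ varsF F →
          (m ∉ ((varsF F).image (fun x => (x, decide (x ∈ X))) ∪
            (B.filter (· ∈ varsF F)).image (fun x => (x, !decide (x ∈ X))))) →
          m.2 = !decide (m.1 ∈ X) ∧ m.1 ∉ B := by
        intro m hm hmv hmK
        rw [Finset.mem_union, not_or] at hmK
        obtain ⟨h1, h2⟩ := hmK
        have hm2 : m.2 ≠ decide (m.1 ∈ X) := by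
          intro h
          exact h1 (Finset.mem_image.mpr ⟨m.1, hmv, by rw [← h]⟩)
        have hm2' : m.2 = !decide (m.1 ∈ X) := by
          cases h : decide (m.1 ∈ X) <;> cases h' : m.2 <;> simp_all
        refine ⟨hm2', fun hmB => h2 (Finset.mem_image.mpr ⟨m.1, ?_, by rw [← hm2']⟩)⟩
        exact Finset.mem_filter.mpr ⟨hmB, hmv⟩
      obtain ⟨he, hB⟩ := key l hl hvl hlK
      obtain ⟨he', hB'⟩ := key l' hl' hvl' hl'K
      have hne1 : l.1 ≠ l'.1 := by
        intro h
        exact hne (Prod.ext h (by rw [he, he', h]))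
      -- build the renamed clause
      set rn : V × Bool → V × Bool := fun m => if m.1 ∈ X then (m.1, !m.2) else m with hrn
      have hC' : (C.filter (fun m => m.1 ∉ B)).image rn ∈ renameF (deleteF F B) X := by
        apply Finset.mem_image_of_mem
        exact Finset.mem_image_of_mem _ hC
      have hrl : rn l = (l.1, true) := by
        simp only [hrn]
        by_cases h : l.1 ∈ X
        · simp [h] at he ⊢; exact he
        · simp [h] at he ⊢; exact Prod.ext rfl he
      have hrl' : rn l' = (l'.1, true) := by
        simp only [hrn]
        by_cases h : l'.1 ∈ X
        · simp [h] at he' ⊢; exact he'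
        · simp [h] at he' ⊢; exact Prod.ext rfl he'
      have h1 : (l.1, true) ∈ ((C.filter (fun m => m.1 ∉ B)).image rn).filter
          (fun m => m.2 = true) := by
        refine Finset.mem_filter.mpr ⟨Finset.mem_image.mpr ⟨l, Finset.mem_filter.mpr ⟨hl, hB⟩, hrl⟩, rfl⟩
      have h2 : (l'.1, true) ∈ ((C.filter (fun m => m.1 ∉ B)).image rn).filter
          (fun m => m.2 = true) := by
        refine Finset.mem_filter.mpr ⟨Finset.mem_image.mpr ⟨l', Finset.mem_filter.mpr ⟨hl', hB'⟩, hrl'⟩, rfl⟩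
      have : 1 < (((C.filter (fun m => m.1 ∉ B)).image rn).filter (fun m => m.2 = true)).card :=
        Finset.one_lt_card.mpr ⟨_, h1, _, h2, by simp [hne1]⟩
      exact absurd (hHorn _ hC') (by omega)
  · rintro ⟨K, hKcard, hmatch, hcover⟩
    set B : Finset V := (varsF F).filter (fun x => (x, false) ∈ K ∧ (x, true) ∈ K) with hBdef
    set X : Finset V := (varsF F).filter (fun x => (x, true) ∈ K ∧ (x, false) ∉ K) with hXdef
    -- key: for x ∈ varsF \ B, the literal renaming to positive is not in K
    have key : ∀ x ∈ varsF F, x ∉ B → (x, !decide (x ∈ X)) ∉ K := by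
      intro x hx hxB
      by_cases hxX : x ∈ X
      · have : (x, false) ∉ K := (Finset.mem_filter.mp hxX).2.2
        simpa [hxX] using this
      · have : ¬((x, true) ∈ K ∧ (x, false) ∉ K) := fun h => hxX (Finset.mem_filter.mpr ⟨hx, h⟩)
        rcases hmatch x hx with hf | ht
        · simp only [hxX, decide_eq_false (by exact hxX), Bool.not_false]
          intro ht
          exact this ⟨ht, fun hf2 => hxB (Finset.mem_filter.mpr ⟨hx, hf2, ht⟩)⟩
        · exact absurd ⟨ht, fun _ => hxB (Finset.mem_filter.mpr ⟨hx, ‹(x,false) ∈ K›, ht⟩)⟩ this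
    -- card bound: |varsF| + |B| ≤ |K|
    have hBk : B.card ≤ k := by
      have hT1 : (varsF F).image (fun x => (x, decide ((x, false) ∉ K))) ⊆ K := by
        intro m hm
        obtain ⟨x, hx, rfl⟩ := Finset.mem_image.mp hm
        by_cases h : (x, false) ∈ K
        · simpa [h] using h
        · rcases hmatch x hx with hf | ht
          · exact absurd hf h
          · simpa [h] using ht
      have hT2 : B.image (fun x => (x, true)) ⊆ K := by
        intro m hm
        obtain ⟨x, hx, rfl⟩ := Finset.mem_image.mp hm
        exact (Finset.mem_filter.mp hx).2.2
      have hdisj : Disjoint ((varsF F).image (fun x => (x, decide ((x, false) ∉ K))))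
          (B.image (fun x => (x, true))) := by
        rw [Finset.disjoint_left]
        intro m hm1 hm2
        obtain ⟨x, hx, rfl⟩ := Finset.mem_image.mp hm1
        obtain ⟨y, hy, heq⟩ := Finset.mem_image.mp hm2
        have hxy : y = x := congrArg Prod.fst heq
        subst hxy
        have : decide ((y, false) ∉ K) = true := (congrArg Prod.snd heq).symm
        have : (y, false) ∉ K := of_decide_eq_true this
        exact this (Finset.mem_filter.mp hy).2.1
      have hcard1 : ((varsF F).image (fun x => (x, decide ((x, false) ∉ K)))).card = (varsF F).card :=
        Finset.card_image_of_injOn (fun a _ b _ h => congrArg Prod.fst h)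
      have hcard2 : (B.image (fun x => (x, true))).card = B.card :=
        Finset.card_image_of_injOn (fun a _ b _ h => congrArg Prod.fst h)
      have hsub : ((varsF F).image (fun x => (x, decide ((x, false) ∉ K)))) ∪
          (B.image (fun x => (x, true))) ⊆ K := Finset.union_subset hT1 hT2
      have := Finset.card_le_card hsub
      rw [Finset.card_union_of_disjoint hdisj, hcard1, hcard2] at this
      omega
    refine ⟨B, hBk, X, ?_⟩
    intro C'' hC''
    obtain ⟨C', hC', rfl⟩ := Finset.mem_image.mp hC''
    obtain ⟨C, hC, rfl⟩ := Finset.mem_image.mp hC'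
    by_contra hlt
    push_neg at hlt
    obtain ⟨a, ha, b, hb, hab⟩ := Finset.one_lt_card.mp hlt
    rw [Finset.mem_filter] at ha hb
    obtain ⟨l, hlmem, hla⟩ := Finset.mem_image.mp ha.1
    obtain ⟨l', hl'mem, hl'b⟩ := Finset.mem_image.mp hb.1
    rw [Finset.mem_filter] at hlmem hl'mem
    obtain ⟨hlC, hlB⟩ := hlmem
    obtain ⟨hl'C, hl'B⟩ := hl'mem
    have hvl : l.1 ∈ varsF F := mem_varsF hC hlC
    have hvl' : l'.1 ∈ varsF F := mem_varsF hC hl'C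
    -- analyze renamed literals
    have hform : ∀ m : V × Bool, (if m.1 ∈ X then (m.1, !m.2) else m) = a ∨
        (if m.1 ∈ X then (m.1, !m.2) else m) = b → True := fun _ _ => trivial
    have hla1 : l.1 = a.1 := by
      by_cases h : l.1 ∈ X <;> simp [h] at hla <;> rw [← hla]
    have hl2 : l.2 = !decide (l.1 ∈ X) := by
      by_cases h : l.1 ∈ X
      · rw [if_pos h] at hla
        have h2 := congrArg Prod.snd hla
        rw [ha.2] at h2
        simp at h2
        simp [h, h2]
      · rw [if_neg h] at hla
        simp only [decide_eq_false h, Bool.not_false]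
        rw [hla]; exact ha.2
    have hl'1 : l'.1 = b.1 := by
      by_cases h : l'.1 ∈ X <;> simp [h] at hl'b <;> rw [← hl'b]
    have hl'2 : l'.2 = !decide (l'.1 ∈ X) := by
      by_cases h : l'.1 ∈ X
      · rw [if_pos h] at hl'b
        have h2 := congrArg Prod.snd hl'b
        rw [hb.2] at h2
        simp at h2
        simp [h, h2]
      · rw [if_neg h] at hl'b
        simp only [decide_eq_false h, Bool.not_false]
        rw [hl'b]; exact hb.2
    have hab1 : a.1 ≠ b.1 := by
      intro h
      exact hab (Prod.ext h (by rw [ha.2, hb.2]))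
    have hne : l ≠ l' := by
      intro h
      exact hab1 (by rw [← hla1, ← hl'1, h])
    rcases hcover C hC l hlC l' hl'C hne with hK | hK
    · exact key l.1 hvl hlB (by rwa [← hl2, Prod.mk.eta])
    · exact key l'.1 hvl' hl'B (by rwa [← hl'2, Prod.mk.eta])
end

section
/- Let G = (V, E) be a graph containing a perfect matching M ⊆ E. Construct a 2CNF formula F2 with a variable v for each vertex v ∈ V, a negative clause {¬a, ¬b} for each matching edge {a,b} ∈ M, and a positive clause {a, b} for each edge {a,b} ∈ E \ M. Then G has a vertex cover of size at most |M| + k if and only if one can delete at most k of the negative clauses from F2 to obtain a satisfiable formula. -/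
variable {V : Type*} [DecidableEq V]

/-- The negative clauses `{¬a, ¬b}` for the perfect-matching edges `{v, f v}`. -/
def negClauses [Fintype V] (f : V → V) : CNF V :=
  Finset.univ.image (fun v : V => ({(v, false), (f v, false)} : Clause V))

/-- The positive clauses `{a, b}` for the non-matching edges. -/
def posClauses [Fintype V] (G : SimpleGraph V) [DecidableRel G.Adj] (f : V → V) : CNF V :=
  ((Finset.univ ×ˢ Finset.univ).filter
      (fun p : V × V => G.Adj p.1 p.2 ∧ p.2 ≠ f p.1)).image
    (fun p => ({(p.1, true), (p.2, true)} : Clause V))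

/-- The number of matching edges `{v, f v}`. -/
def matchCard [Fintype V] (f : V → V) : ℕ :=
  (Finset.univ.image (fun v : V => ({v, f v} : Finset V))).card

set_option linter.unusedSectionVars false

section VCAux
variable [Fintype V]

def medges (f : V → V) : Finset (Finset V) :=
  Finset.univ.image (fun v : V => ({v, f v} : Finset V))

def negOf (e : Finset V) : Clause V := e.image (fun v => (v, false))

lemma varsC_negOf (e : Finset V) : varsC (negOf e) = e := by
  simp [varsC, negOf, Finset.image_image, Function.comp_def]

lemma negOf_pair (f : V → V) (v : V) :
    negOf ({v, f v} : Finset V) = ({(v, false), (f v, false)} : Clause V) := by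
  simp [negOf, Finset.image_insert]

lemma negClauses_eq (f : V → V) :
    negClauses f = (medges f).image negOf := by
  rw [medges, Finset.image_image]
  simp [negClauses, Function.comp_def, negOf_pair]

lemma mem_medges {f : V → V} {e : Finset V} (he : e ∈ medges f) :
    ∃ w, e = {w, f w} := by
  rcases Finset.mem_image.1 he with ⟨w, _, h⟩; exact ⟨w, h.symm⟩

lemma fiber_eq {f : V → V} (hinv : Function.Involutive f) (K : Finset V)
    {e : Finset V} (he : e ∈ medges f) :
    K.filter (fun v => ({v, f v} : Finset V) = e) = K ∩ e := by
  obtain ⟨w, rfl⟩ := mem_medges he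
  ext v
  simp only [Finset.mem_filter, Finset.mem_inter]
  constructor
  · rintro ⟨hv, h⟩
    exact ⟨hv, h ▸ Finset.mem_insert_self v _⟩
  · rintro ⟨hv, h⟩
    refine ⟨hv, ?_⟩
    rcases Finset.mem_insert.1 h with rfl | h
    · rfl
    · rcases Finset.mem_singleton.1 h with rfl
      rw [hinv]
      exact Finset.pair_comm _ _

lemma card_eq_sum (f : V → V) (hinv : Function.Involutive f) (K : Finset V) :
    K.card = ∑ e ∈ medges f, (K ∩ e).card := by
  rw [Finset.card_eq_sum_card_fiberwise
    (f := fun v => ({v, f v} : Finset V)) (t := medges f)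
    (fun v _ => Finset.mem_image_of_mem _ (Finset.mem_univ v))]
  exact Finset.sum_congr rfl fun e he => by rw [fiber_eq hinv K he]

lemma filter_card_le {f : V → V} (D : CNF V) :
    (((medges f).filter (fun e => negOf e ∈ D)).card) ≤ D.card := by
  apply Finset.card_le_card_of_injOn negOf
  · intro e he; exact (Finset.mem_filter.1 he).2
  · intro e₁ _ e₂ _ h
    have := congrArg varsC h
    rwa [varsC_negOf, varsC_negOf] at this

lemma card_le_filter {f : V → V} {D : CNF V} (hD : D ⊆ negClauses f) :
    D.card ≤ ((medges f).filter (fun e => negOf e ∈ D)).card := by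
  apply Finset.card_le_card_of_injOn varsC
  · intro C hC
    have := hD hC
    rw [negClauses_eq] at this
    obtain ⟨e, he, rfl⟩ := Finset.mem_image.1 this
    rw [varsC_negOf]
    exact Finset.mem_filter.2 ⟨he, hC⟩
  · intro C₁ h₁ C₂ h₂ h
    have e₁ := hD h₁; have e₂ := hD h₂
    rw [negClauses_eq] at e₁ e₂
    obtain ⟨a, _, rfl⟩ := Finset.mem_image.1 e₁
    obtain ⟨b, _, rfl⟩ := Finset.mem_image.1 e₂
    rw [varsC_negOf, varsC_negOf] at h
    rw [h]

lemma sum_one_add {f : V → V} (D : CNF V) :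
    ∑ e ∈ medges f, (1 + (if negOf e ∈ D then 1 else 0)) =
      (medges f).card + ((medges f).filter (fun e => negOf e ∈ D)).card := by
  rw [Finset.sum_add_distrib, Finset.sum_const, smul_eq_mul, mul_one, Finset.card_filter]

end VCAux

/-- For a graph `G` with a perfect matching `M` (given by the fixed-point-free adjacency
involution `f`), `G` has a vertex cover of size at most `|M| + k` iff one can delete at
most `k` of the negative clauses from the 2CNF formula `F2` (negative clauses for the
matching edges, positive clauses for all other edges) to obtain a satisfiable formula. -/


theorem stmt12 [Fintype V] (G : SimpleGraph V) [DecidableRel G.Adj] (f : V → V)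
    (hinv : Function.Involutive f) (hfp : ∀ v, f v ≠ v) (hadj : ∀ v, G.Adj v (f v))
    (k : ℕ) :
    (∃ K : Finset V, (∀ a b : V, G.Adj a b → a ∈ K ∨ b ∈ K) ∧
        K.card ≤ matchCard f + k) ↔
      (∃ D ⊆ negClauses f, D.card ≤ k ∧
        Satisfiable ((negClauses f ∪ posClauses G f) \ D)) := by
  classical
  have hM : matchCard f = (medges f).card := rfl
  constructor
  · rintro ⟨K, hcov, hcard⟩
    set σ : V → Bool := fun v => decide (v ∈ K) with hσ
    have hσK : ∀ v, σ v = true ↔ v ∈ K := by simp [hσ]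
    set D : CNF V := (negClauses f).filter (fun C => ¬ satClause σ C) with hD
    refine ⟨D, Finset.filter_subset _ _, ?_, σ, ?_⟩
    · -- D.card ≤ k
      have h1 : D.card ≤ ((medges f).filter (fun e => negOf e ∈ D)).card :=
        card_le_filter (Finset.filter_subset _ _)
      have hpt : ∀ e ∈ medges f, 1 + (if negOf e ∈ D then 1 else 0) ≤ (K ∩ e).card := by
        intro e he
        obtain ⟨w, rfl⟩ := mem_medges he
        have hwcov : w ∈ K ∨ f w ∈ K := hcov w (f w) (hadj w)
        by_cases hd : negOf ({w, f w} : Finset V) ∈ D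
        · have hns : ¬ satClause σ (negOf ({w, f w} : Finset V)) := (Finset.mem_filter.1 hd).2
          rw [negOf_pair] at hns
          have hw : w ∈ K := by
            rw [← hσK]
            by_contra h
            exact hns ⟨(w, false), Finset.mem_insert_self _ _, by simpa using h⟩
          have hfw : f w ∈ K := by
            rw [← hσK]
            by_contra h
            exact hns ⟨(f w, false), by simp, by simpa using h⟩
          have hsub : ({w, f w} : Finset V) ⊆ K := by
            intro x hx
            rcases Finset.mem_insert.1 hx with rfl | hx
            · exact hw
            · rcases Finset.mem_singleton.1 hx with rfl; exact hfw
          rw [Finset.inter_eq_right.2 hsub, if_pos hd]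
          rw [Finset.card_insert_of_notMem (by simp [Ne.symm (hfp w)]), Finset.card_singleton]
        · rw [if_neg hd]
          have : (K ∩ ({w, f w} : Finset V)).Nonempty := by
            rcases hwcov with h | h
            · exact ⟨w, Finset.mem_inter.2 ⟨h, Finset.mem_insert_self _ _⟩⟩
            · exact ⟨f w, Finset.mem_inter.2 ⟨h, by simp⟩⟩
          simpa using Finset.card_pos.2 this
      have h2 : (medges f).card + ((medges f).filter (fun e => negOf e ∈ D)).card ≤ K.card := by
        rw [card_eq_sum f hinv K, ← sum_one_add]
        exact Finset.sum_le_sum hpt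
      omega
    · -- Satisfies
      intro C hC
      obtain ⟨hCmem, hCnD⟩ := Finset.mem_sdiff.1 hC
      rcases Finset.mem_union.1 hCmem with hneg | hpos
      · by_contra h
        exact hCnD (Finset.mem_filter.2 ⟨hneg, h⟩)
      · obtain ⟨p, hp, rfl⟩ := Finset.mem_image.1 hpos
        have hab : G.Adj p.1 p.2 := (Finset.mem_filter.1 hp).2.1
        rcases hcov p.1 p.2 hab with h | h
        · exact ⟨(p.1, true), Finset.mem_insert_self _ _, (hσK _).2 h⟩
        · exact ⟨(p.2, true), by simp, (hσK _).2 h⟩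
  · rintro ⟨D, hDsub, hDcard, σ, hsat⟩
    let en := Fintype.equivFin V
    set K : Finset V := Finset.univ.filter
      (fun v => σ v = true ∨ (σ v = false ∧ σ (f v) = false ∧ en v < en (f v))) with hK
    have hmemK : ∀ v, v ∈ K ↔
        (σ v = true ∨ (σ v = false ∧ σ (f v) = false ∧ en v < en (f v))) := by
      intro v; simp [hK]
    refine ⟨K, ?_, ?_⟩
    · -- cover
      intro a b hab
      by_cases hb : b = f a
      · subst hb
        by_cases ha : σ a = true
        · left; exact (hmemK a).2 (Or.inl ha)
        · by_cases hfa : σ (f a) = true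
          · right; exact (hmemK _).2 (Or.inl hfa)
          · have h1 : σ a = false := by simpa using ha
            have h2 : σ (f a) = false := by simpa using hfa
            have hne : en a ≠ en (f a) := by
              intro h
              exact hfp a (en.injective h).symm
            rcases lt_or_gt_of_ne hne with h | h
            · left; exact (hmemK a).2 (Or.inr ⟨h1, h2, h⟩)
            · right
              refine (hmemK _).2 (Or.inr ⟨h2, ?_, ?_⟩)
              · rw [hinv a]; exact h1
              · rw [hinv a]; exact h
      · have hpos : ({(a, true), (b, true)} : Clause V) ∈ posClauses G f := by
          refine Finset.mem_image.2 ⟨(a, b), ?_, rfl⟩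
          refine Finset.mem_filter.2 ⟨by simp, hab, hb⟩
        have hnD : ({(a, true), (b, true)} : Clause V) ∉ D := by
          intro h
          have hmem := hDsub h
          rw [negClauses_eq] at hmem
          obtain ⟨e, _, he⟩ := Finset.mem_image.1 hmem
          have : ((a : V), true) ∈ negOf e := he ▸ Finset.mem_insert_self _ _
          obtain ⟨v, _, hv⟩ := Finset.mem_image.1 this
          exact Bool.false_ne_true (congrArg Prod.snd hv)
        obtain ⟨l, hl, hσl⟩ := hsat _ (Finset.mem_sdiff.2 ⟨Finset.mem_union_right _ hpos, hnD⟩)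
        rcases Finset.mem_insert.1 hl with rfl | hl
        · left; exact (hmemK a).2 (Or.inl hσl)
        · rcases Finset.mem_singleton.1 hl with rfl
          right; exact (hmemK b).2 (Or.inl hσl)
    · -- card bound
      have hpt : ∀ e ∈ medges f, (K ∩ e).card ≤ 1 + (if negOf e ∈ D then 1 else 0) := by
        intro e he
        obtain ⟨w, rfl⟩ := mem_medges he
        by_cases hd : negOf ({w, f w} : Finset V) ∈ D
        · rw [if_pos hd]
          calc (K ∩ ({w, f w} : Finset V)).card ≤ ({w, f w} : Finset V).card :=
                Finset.card_le_card (Finset.inter_subset_right)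
            _ ≤ 2 := Finset.card_insert_le _ _ |>.trans (by simp)
        · rw [if_neg hd]
          have hnot : ¬ (w ∈ K ∧ f w ∈ K) := by
            rintro ⟨hw, hfw⟩
            rcases (hmemK w).1 hw with h1 | ⟨h1, h1', h1''⟩
            · rcases (hmemK (f w)).1 hfw with h2 | ⟨h2, h2', h2''⟩
              · -- both true: clause unsatisfied but must be satisfied
                have hclause : negOf ({w, f w} : Finset V) ∈
                    (negClauses f ∪ posClauses G f) \ D := by
                  refine Finset.mem_sdiff.2 ⟨Finset.mem_union_left _ ?_, hd⟩
                  rw [negClauses_eq]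
                  exact Finset.mem_image_of_mem _ he
                obtain ⟨l, hl, hσl⟩ := hsat _ hclause
                rw [negOf_pair] at hl
                rcases Finset.mem_insert.1 hl with rfl | hl
                · simp [h1] at hσl
                · rcases Finset.mem_singleton.1 hl with rfl
                  simp [h2] at hσl
              · rw [hinv w] at h2'
                simp [h1] at h2'
            · rcases (hmemK (f w)).1 hfw with h2 | ⟨h2, h2', h2''⟩
              · rw [h2] at h1'; simp at h1'
              · rw [hinv w] at h2''
                exact absurd h2'' (not_lt.2 h1''.le)
          rw [Finset.card_le_one]
          intro a ha b hb
          obtain ⟨haK, hae⟩ := Finset.mem_inter.1 ha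
          obtain ⟨hbK, hbe⟩ := Finset.mem_inter.1 hb
          have hae' : a = w ∨ a = f w := by simpa using hae
          have hbe' : b = w ∨ b = f w := by simpa using hbe
          rcases hae' with rfl | rfl <;> rcases hbe' with rfl | rfl
          · rfl
          · exact absurd ⟨haK, hbK⟩ hnot
          · exact absurd ⟨hbK, haK⟩ hnot
          · rfl
      have h2 : K.card ≤ (medges f).card + ((medges f).filter (fun e => negOf e ∈ D)).card := by
        rw [card_eq_sum f hinv K, ← sum_one_add]
        exact Finset.sum_le_sum hpt
      have h3 : ((medges f).filter (fun e => negOf e ∈ D)).card ≤ D.card := filter_card_le D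
      omega
end

section
/- Under the construction of the previous statement, if H contains a k-clique {v1, …, vk} with vi ∈ Vi, then B = {v1, …, vk} is a weak C-backdoor set of F of size k for every class C containing all anti-monotone 2CNF formulas: setting all variables of B to true yields a formula F[τ] that is an anti-monotone 2CNF formula (hence in C) and is satisfiable (it is 0-valid). -/
variable {V : Type*} [DecidableEq V]

/-- The CNF formula associated with a `k`-partite graph: a clause `{¬u, ¬v}` for every
pair of distinct non-adjacent vertices and, for each part `i`, the clause consisting of
all variables of part `i`, positively. -/
def partiteCNF [Fintype V] (k : ℕ) (part : V → Fin k)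
    (H : SimpleGraph V) [DecidableRel H.Adj] : CNF V :=
  (((Finset.univ ×ˢ Finset.univ).filter
        (fun p : V × V => p.1 ≠ p.2 ∧ ¬H.Adj p.1 p.2)).image
      (fun p => ({(p.1, false), (p.2, false)} : Clause V))) ∪
    (Finset.univ.image (fun i : Fin k =>
      (Finset.univ.filter (fun v : V => part v = i)).image (fun v => (v, true))))

/-- A formula is an anti-monotone 2CNF formula if every clause has at most two
literals, all of them negative. -/
def IsAntiMonotone2CNF (F : CNF V) : Prop :=
  ∀ C ∈ F, C.card ≤ 2 ∧ ∀ l ∈ C, l.2 = false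

/-- If `H` contains a `k`-clique `{f 1, …, f k}` with `f i` in part `i`, then
`B = {f 1, …, f k}` is a weak `Cc`-backdoor set of size `k` of the associated formula,
for every class `Cc` containing all anti-monotone 2CNF formulas: setting all variables
of `B` to true yields an anti-monotone 2CNF formula (hence a member of `Cc`) that is
satisfiable. -/
theorem stmt15 [Fintype V] (k : ℕ) (part : V → Fin k)
    (H : SimpleGraph V) [DecidableRel H.Adj]
    (hind : ∀ u v : V, H.Adj u v → part u ≠ part v)
    (Cc : Set (CNF V)) (hCc : ∀ F' : CNF V, IsAntiMonotone2CNF F' → F' ∈ Cc)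
    (f : Fin k → V) (hf1 : ∀ i, part (f i) = i)
    (hf2 : ∀ i j, i ≠ j → H.Adj (f i) (f j)) :
    (Finset.univ.image f).card = k ∧
    IsAntiMonotone2CNF
      (reduceF (partiteCNF k part H) (Finset.univ.image f) (fun _ => true)) ∧
    reduceF (partiteCNF k part H) (Finset.univ.image f) (fun _ => true) ∈ Cc ∧
    Satisfiable
      (reduceF (partiteCNF k part H) (Finset.univ.image f) (fun _ => true)) := by
  set B : Finset V := Finset.univ.image f with hB
  have finj : Function.Injective f := by
    intro i j h
    have := hf1 i
    rw [h, hf1 j] at this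
    exact this.symm
  -- helper: structure of clauses in the reduced formula
  have hmem : ∀ D ∈ reduceF (partiteCNF k part H) B (fun _ => true),
      ∃ u v : V, u ≠ v ∧ ¬H.Adj u v ∧
        D = ({((u : V), false), (v, false)} : Clause V).filter (fun l => l.1 ∉ B) := by
    intro D hD
    simp only [reduceF, Finset.mem_image, Finset.mem_filter] at hD
    obtain ⟨C, ⟨hC, hτ⟩, rfl⟩ := hD
    simp only [partiteCNF, Finset.mem_union, Finset.mem_image, Finset.mem_filter,
      Finset.mem_product, Finset.mem_univ, true_and] at hC
    rcases hC with ⟨p, ⟨hne, hnadj⟩, rfl⟩ | ⟨i, _, rfl⟩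
    · exact ⟨p.1, p.2, hne, hnadj, rfl⟩
    · exfalso
      have hmemC : ((f i : V), true) ∈
          (Finset.univ.filter (fun v : V => part v = i)).image (fun v => ((v : V), true)) := by
        simp [hf1 i]
      have hfiB : f i ∈ B := by simp [hB]
      have := hτ _ hmemC hfiB
      simp at this
  have hanti : IsAntiMonotone2CNF (reduceF (partiteCNF k part H) B (fun _ => true)) := by
    intro D hD
    obtain ⟨u, v, hne, hnadj, rfl⟩ := hmem D hD
    constructor
    · calc (({((u : V), false), (v, false)} : Clause V).filter (fun l => l.1 ∉ B)).card
          ≤ ({((u : V), false), (v, false)} : Clause V).card := Finset.card_filter_le _ _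
        _ ≤ 2 := Finset.card_insert_le _ _ |>.trans (by simp)
    · intro l hl
      simp only [Finset.mem_filter, Finset.mem_insert, Finset.mem_singleton] at hl
      rcases hl.1 with rfl | rfl <;> rfl
  refine ⟨?_, hanti, hCc _ hanti, ?_⟩
  · rw [Finset.card_image_of_injective _ finj, Finset.card_univ, Fintype.card_fin]
  · refine ⟨fun _ => false, ?_⟩
    intro D hD
    obtain ⟨u, v, hne, hnadj, rfl⟩ := hmem D hD
    -- not both u and v are in B
    have : u ∉ B ∨ v ∉ B := by
      by_contra h
      push_neg at h
      obtain ⟨hu, hv⟩ := h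
      simp only [hB, Finset.mem_image, Finset.mem_univ, true_and] at hu hv
      obtain ⟨i, rfl⟩ := hu
      obtain ⟨j, rfl⟩ := hv
      rcases eq_or_ne i j with rfl | hij
      · exact hne rfl
      · exact hnadj (hf2 i j hij)
    rcases this with h | h
    · exact ⟨(u, false), by simp [Finset.mem_filter, h], rfl⟩
    · exact ⟨(v, false), by simp [Finset.mem_filter, h], rfl⟩
end
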